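/- Let R be a finite subset of (Fin n → ZMod 2), let w be a weight function with w(y) ∈ (0,1] for all y ∈ R, and write w(A) = Σ_{y∈A} w(y). Let κ ∈ (0,1), let pivot = ⌈e^{3/2}·(1 + 1/κ)²⌉, and let m ≥ 0 be an integer such that w(R) − 1 = 2^{m} · pivot and w(R) > 1 + (1+κ)·pivot. Then for every fixed α ∈ (Fin m → ZMod 2), if h is chosen uniformly at random from H_xor(n, m), then Pr[ pivot/(1+κ) ≤ w(R ∩ h^{-1}(α)) ≤ 1 + (1+κ)·pivot ] ≥ 1 − e^{-3/2}. -/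

import Mathlib

open scoped Classical

/-- The XOR hash family `H_xor(n, m)`: for coefficients
`a i = (a_{i,0}, (a_{i,1}, …, a_{i,n}))`, the hash of `y` has `i`-th component
`a_{i,0} + Σ_l a_{i,l}·y_l` over `ZMod 2`. -/
def hashXor (n m : ℕ) (a : Fin m → ZMod 2 × (Fin n → ZMod 2))
    (y : Fin n → ZMod 2) : Fin m → ZMod 2 :=
  fun j => (a j).1 + ∑ l, (a j).2 l * y l

open Finset

lemma zmod2_ne_zero : ∀ x : ZMod 2, x ≠ 0 → x = 1 := by decide
lemma zmod2_ne_iff : ∀ x : ZMod 2, ¬ (x = 0) ↔ x = 1 := by decide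

lemma card_single_coord (n : ℕ) (y : Fin n → ZMod 2) (c : ZMod 2) :
    ((Finset.univ.filter (fun b : ZMod 2 × (Fin n → ZMod 2) =>
      b.1 + ∑ l, b.2 l * y l = c)).card) = 2 ^ n := by
  have h : (Finset.univ.filter (fun b : ZMod 2 × (Fin n → ZMod 2) =>
      b.1 + ∑ l, b.2 l * y l = c))
      = Finset.univ.image (fun v : Fin n → ZMod 2 => ((c - ∑ l, v l * y l, v) : ZMod 2 × (Fin n → ZMod 2))) := by
    ext ⟨x, v⟩
    simp only [mem_filter, mem_univ, true_and, mem_image, Prod.mk.injEq]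
    constructor
    · intro h
      exact ⟨v, by rw [← h]; ring, rfl⟩
    · rintro ⟨v', h1, rfl⟩
      rw [← h1]; ring
  rw [h, Finset.card_image_of_injective _ (fun a b hab => (Prod.ext_iff.mp hab).2),
    Finset.card_univ]
  simp

lemma card_ker (n : ℕ) (hn : 1 ≤ n) (d : Fin n → ZMod 2) (hd : d ≠ 0) :
    ((Finset.univ.filter (fun v : Fin n → ZMod 2 => ∑ l, v l * d l = 0)).card) = 2 ^ (n - 1) := by
  obtain ⟨l₀, hl₀⟩ : ∃ l, d l ≠ 0 := by
    by_contra h; push_neg at h; exact hd (funext fun l => h l)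
  have hd1 : d l₀ = 1 := zmod2_ne_zero _ hl₀
  set f : (Fin n → ZMod 2) → (Fin n → ZMod 2) :=
    fun v => Function.update v l₀ (v l₀ + 1) with hf
  have hsum : ∀ v : Fin n → ZMod 2, ∑ l, (f v) l * d l = (∑ l, v l * d l) + 1 := by
    intro v
    rw [Finset.sum_eq_sum_sdiff_singleton_add (Finset.mem_univ l₀) (fun l => (f v) l * d l),
      Finset.sum_eq_sum_sdiff_singleton_add (Finset.mem_univ l₀) (fun l => v l * d l)]
    have h1 : ∑ l ∈ Finset.univ \ {l₀}, (f v) l * d l = ∑ l ∈ Finset.univ \ {l₀}, v l * d l := by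
      apply Finset.sum_congr rfl
      intro l hl
      simp only [Finset.mem_sdiff, Finset.mem_singleton] at hl
      rw [hf]; simp [Function.update_of_ne hl.2]
    rw [h1, hf]
    simp [hd1]
    ring
  have hff : ∀ v, f (f v) = v := by
    intro v
    rw [hf]
    simp only [Function.update_self, Function.update_idem]
    rw [show v l₀ + 1 + 1 = v l₀ by generalize v l₀ = x; revert x; decide]
    exact Function.update_eq_self _ _
  have hcard : (Finset.univ.filter (fun v : Fin n → ZMod 2 => ∑ l, v l * d l = 0)).card
      = (Finset.univ.filter (fun v : Fin n → ZMod 2 => ∑ l, v l * d l = 1)).card := by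
    apply Finset.card_nbij' f f
    · intro v hv
      simp only [Finset.mem_coe, Finset.mem_filter, Finset.mem_univ, true_and] at hv ⊢
      rw [hsum, hv]; ring
    · intro v hv
      simp only [Finset.mem_coe, Finset.mem_filter, Finset.mem_univ, true_and] at hv ⊢
      rw [hsum, hv]; decide
    · intro v _; exact hff v
    · intro v _; exact hff v
  have htot := Finset.card_filter_add_card_filter_not
    (s := (Finset.univ : Finset (Fin n → ZMod 2)))
    (fun v => ∑ l, v l * d l = 0)
  simp only [zmod2_ne_iff] at htot
  rw [Finset.card_univ] at htot
  have hcu : Fintype.card (Fin n → ZMod 2) = 2 ^ n := by simp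
  rw [hcu, ← hcard] at htot
  have h2 : 2 ^ (n - 1 + 1) = 2 * 2 ^ (n - 1) := pow_succ' 2 (n - 1)
  rw [Nat.sub_add_cancel hn] at h2
  apply Nat.eq_of_mul_eq_mul_left (show 0 < 2 by norm_num)
  rw [← h2, ← htot]
  ring

lemma card_pair_coord (n : ℕ) (hn : 1 ≤ n) (y y' : Fin n → ZMod 2) (hyy : y ≠ y') (c : ZMod 2)
    (hker : ((Finset.univ.filter (fun v : Fin n → ZMod 2 => ∑ l, v l * (y l - y' l) = 0)).card) = 2 ^ (n - 1)) :
    ((Finset.univ.filter (fun b : ZMod 2 × (Fin n → ZMod 2) =>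
      b.1 + ∑ l, b.2 l * y l = c ∧ b.1 + ∑ l, b.2 l * y' l = c)).card) = 2 ^ (n - 1) := by
  have hsub : ∀ v : Fin n → ZMod 2,
      ∑ l, v l * (y l - y' l) = (∑ l, v l * y l) - ∑ l, v l * y' l := by
    intro v
    rw [← Finset.sum_sub_distrib]
    exact Finset.sum_congr rfl fun l _ => by ring
  have h : (Finset.univ.filter (fun b : ZMod 2 × (Fin n → ZMod 2) =>
      b.1 + ∑ l, b.2 l * y l = c ∧ b.1 + ∑ l, b.2 l * y' l = c))
      = (Finset.univ.filter (fun v : Fin n → ZMod 2 => ∑ l, v l * (y l - y' l) = 0)).image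
        (fun v : Fin n → ZMod 2 => ((c - ∑ l, v l * y l, v) : ZMod 2 × (Fin n → ZMod 2))) := by
    ext ⟨x, v⟩
    simp only [mem_filter, mem_univ, true_and, mem_image, Prod.mk.injEq]
    constructor
    · rintro ⟨h1, h2⟩
      refine ⟨v, ?_, by linear_combination -h1, rfl⟩
      rw [hsub]
      linear_combination h1 - h2
    · rintro ⟨v', hv', h1, h2⟩
      subst h2
      rw [hsub] at hv'
      exact ⟨by linear_combination -h1, by linear_combination -h1 - hv'⟩
  rw [h, Finset.card_image_of_injective _ (fun a b hab => (Prod.ext_iff.mp hab).2), hker]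

lemma card_single_hash (n m : ℕ) (y : Fin n → ZMod 2) (α : Fin m → ZMod 2)
    (hc : ∀ c : ZMod 2, ((Finset.univ.filter (fun b : ZMod 2 × (Fin n → ZMod 2) =>
      b.1 + ∑ l, b.2 l * y l = c)).card) = 2 ^ n) :
    (Finset.univ.filter (fun a : Fin m → ZMod 2 × (Fin n → ZMod 2) =>
      hashXor n m a y = α)).card = 2 ^ (n * m) := by
  have h : Finset.univ.filter (fun a : Fin m → ZMod 2 × (Fin n → ZMod 2) =>
        hashXor n m a y = α)
      = Fintype.piFinset (fun j : Fin m => Finset.univ.filter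
          (fun b : ZMod 2 × (Fin n → ZMod 2) => b.1 + ∑ l, b.2 l * y l = α j)) := by
    ext a
    simp [hashXor, funext_iff, Fintype.mem_piFinset]
  rw [h, Fintype.card_piFinset]
  simp only [hc]
  rw [Finset.prod_const, Finset.card_univ, Fintype.card_fin, ← pow_mul]

lemma card_pair_hash (n m : ℕ) (y y' : Fin n → ZMod 2) (α : Fin m → ZMod 2)
    (hc : ∀ c : ZMod 2, ((Finset.univ.filter (fun b : ZMod 2 × (Fin n → ZMod 2) =>
      b.1 + ∑ l, b.2 l * y l = c ∧ b.1 + ∑ l, b.2 l * y' l = c)).card) = 2 ^ (n - 1)) :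
    (Finset.univ.filter (fun a : Fin m → ZMod 2 × (Fin n → ZMod 2) =>
      hashXor n m a y = α ∧ hashXor n m a y' = α)).card = 2 ^ ((n - 1) * m) := by
  have h : Finset.univ.filter (fun a : Fin m → ZMod 2 × (Fin n → ZMod 2) =>
        hashXor n m a y = α ∧ hashXor n m a y' = α)
      = Fintype.piFinset (fun j : Fin m => Finset.univ.filter
          (fun b : ZMod 2 × (Fin n → ZMod 2) =>
            b.1 + ∑ l, b.2 l * y l = α j ∧ b.1 + ∑ l, b.2 l * y' l = α j)) := by
    ext a
    simp only [mem_filter, mem_univ, true_and, Fintype.mem_piFinset, hashXor, funext_iff]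
    exact ⟨fun ⟨h1, h2⟩ j => ⟨h1 j, h2 j⟩, fun h => ⟨fun j => (h j).1, fun j => (h j).2⟩⟩
  rw [h, Fintype.card_piFinset]
  simp only [hc]
  rw [Finset.prod_const, Finset.card_univ, Fintype.card_fin, ← pow_mul]

lemma card_single_hash' (n m : ℕ) (y : Fin n → ZMod 2) (α : Fin m → ZMod 2) :
    (Finset.univ.filter (fun a : Fin m → ZMod 2 × (Fin n → ZMod 2) =>
      hashXor n m a y = α)).card = 2 ^ (n * m) :=
  card_single_hash n m y α (fun c => card_single_coord n y c)

lemma card_pair_hash' (n m : ℕ) (hn : 1 ≤ n) (y y' : Fin n → ZMod 2) (hyy : y ≠ y')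
    (α : Fin m → ZMod 2) :
    (Finset.univ.filter (fun a : Fin m → ZMod 2 × (Fin n → ZMod 2) =>
      hashXor n m a y = α ∧ hashXor n m a y' = α)).card = 2 ^ ((n - 1) * m) := by
  apply card_pair_hash n m y y' α
  intro c
  apply card_pair_coord n hn y y' hyy c
  have hd : (fun l => y l - y' l) ≠ (0 : Fin n → ZMod 2) := by
    intro h0
    apply hyy
    funext l
    have := congrFun h0 l
    simpa [sub_eq_zero] using this
  exact card_ker n hn (fun l => y l - y' l) hd

set_option maxHeartbeats 1000000

/-- With `pivot = ⌈e^{3/2}·(1+1/κ)²⌉`, `w(R) − 1 = 2^m·pivot` and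
`w(R) > 1 + (1+κ)·pivot`, a random XOR hash cell `R ∩ h⁻¹(α)` has weight in
`[pivot/(1+κ), 1+(1+κ)·pivot]` with probability at least `1 − e^{-3/2}`. -/
theorem hashXor_cell_weight_success
    (n m : ℕ) (hn : 1 ≤ n)
    (R : Finset (Fin n → ZMod 2)) (w : (Fin n → ZMod 2) → ℝ)
    (hw : ∀ z ∈ R, w z ∈ Set.Ioc (0 : ℝ) 1)
    (κ : ℝ) (hκ0 : 0 < κ) (hκ1 : κ < 1)
    (pivot : ℝ) (hpivot : pivot = (⌈Real.exp (3 / 2) * (1 + 1 / κ) ^ 2⌉ : ℝ))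
    (hm : (∑ z ∈ R, w z) - 1 = (2 : ℝ) ^ m * pivot)
    (hbig : 1 + (1 + κ) * pivot < ∑ z ∈ R, w z)
    (α : Fin m → ZMod 2) :
    1 - Real.exp (-(3 / 2)) ≤
      ((Finset.univ.filter
          (fun a : Fin m → ZMod 2 × (Fin n → ZMod 2) =>
            pivot / (1 + κ) ≤ ∑ z ∈ R.filter (fun z => hashXor n m a z = α), w z ∧
            (∑ z ∈ R.filter (fun z => hashXor n m a z = α), w z) ≤ 1 + (1 + κ) * pivot)).card : ℝ) /
        (Fintype.card (Fin m → ZMod 2 × (Fin n → ZMod 2)) : ℝ) := by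
  classical
  -- abbreviations
  set W : ℝ := ∑ z ∈ R, w z with hWdef
  clear_value W
  set X : (Fin m → ZMod 2 × (Fin n → ZMod 2)) → ℝ :=
    fun a => ∑ z ∈ R.filter (fun z => hashXor n m a z = α), w z with hXdef
  show 1 - Real.exp (-(3 / 2)) ≤
      ((Finset.univ.filter
          (fun a : Fin m → ZMod 2 × (Fin n → ZMod 2) =>
            pivot / (1 + κ) ≤ X a ∧ X a ≤ 1 + (1 + κ) * pivot)).card : ℝ) /
        (Fintype.card (Fin m → ZMod 2 × (Fin n → ZMod 2)) : ℝ)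
  clear_value X
  -- basic positivity
  have hκ1' : (0:ℝ) < 1 + κ := by linarith only [hκ0]
  have hxpos : (0:ℝ) < Real.exp (3/2) * (1 + 1/κ)^2 := by positivity
  have hpivot_ge : Real.exp (3/2) * (1 + 1/κ)^2 ≤ pivot := by
    rw [hpivot]; exact Int.le_ceil _
  have hpivot_pos : (0:ℝ) < pivot := lt_of_lt_of_le hxpos hpivot_ge
  have h2mpos : (0:ℝ) < (2:ℝ)^m := by positivity
  have hW1 : W = 1 + (2:ℝ)^m * pivot := by linarith only [hm]
  have hm1 : 1 ≤ m := by
    rcases Nat.eq_zero_or_pos m with h0 | h; swap; · exact h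
    subst h0
    simp only [pow_zero, one_mul] at hW1
    nlinarith only [hW1, hbig, hpivot_pos, hκ0]
  have h2m : (2:ℝ) ≤ (2:ℝ)^m := by
    calc (2:ℝ) = 2^1 := (pow_one 2).symm
    _ ≤ 2^m := by apply pow_le_pow_right₀ (by norm_num) hm1
  -- the mean
  set μ : ℝ := pivot + 1/(2:ℝ)^m with hμdef
  clear_value μ
  have hμ_ge : pivot ≤ μ := by
    have hs0 : (0:ℝ) < 1/(2:ℝ)^m := by positivity
    rw [hμdef]; linarith only [hs0]
  have hμpos : (0:ℝ) < μ := lt_of_lt_of_le hpivot_pos hμ_ge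
  have hμ_le : μ ≤ pivot + 1/2 := by
    rw [hμdef]
    have : 1/(2:ℝ)^m ≤ 1/2 := by
      apply div_le_div_of_nonneg_left (by norm_num) (by norm_num) h2m
    linarith only [this]
  have hWμ : W = (2:ℝ)^m * μ := by
    rw [hμdef, hW1]; field_simp; ring
  -- the deviation threshold
  set t : ℝ := μ * κ / (1 + κ) with htdef
  clear_value t
  have ht' : t * (1 + κ) = μ * κ := by
    rw [htdef]; field_simp
  have htpos : (0:ℝ) < t := by rw [htdef]; positivity
  -- weights facts
  have hw0 : ∀ z ∈ R, (0:ℝ) ≤ w z := fun z hz => le_of_lt (hw z hz).1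
  have hWpos : (0:ℝ) < W := by nlinarith only [hbig, hpivot_pos, hκ0]
  set Q : ℝ := ∑ z ∈ R, (w z)^2 with hQdef
  clear_value Q
  have hQW : Q ≤ W := by
    rw [hQdef, hWdef]
    apply Finset.sum_le_sum
    intro z hz
    nlinarith only [(hw z hz).1, (hw z hz).2]
  have hQ0 : 0 ≤ Q := hQdef ▸ Finset.sum_nonneg fun z hz => sq_nonneg _
  -- counting constants
  set K1 : ℝ := (2:ℝ)^(n*m) with hK1def
  clear_value K1
  set K2 : ℝ := (2:ℝ)^((n-1)*m) with hK2def
  clear_value K2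
  have hK1pos : 0 < K1 := by rw [hK1def]; positivity
  have hK2pos : 0 < K2 := by rw [hK2def]; positivity
  have hK12 : K1 = K2 * (2:ℝ)^m := by
    rw [hK1def, hK2def, ← pow_add]
    congr 1
    cases n with
    | zero => omega
    | succ k => simp [Nat.succ_sub_one]; ring
  have hNcard : ((Fintype.card (Fin m → ZMod 2 × (Fin n → ZMod 2)) : ℕ) : ℝ)
      = (2:ℝ)^m * K1 := by
    have h1 : Fintype.card (Fin m → ZMod 2 × (Fin n → ZMod 2)) = (2 * 2^n)^m := by
      simp [Fintype.card_fun]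
    rw [h1, hK1def]
    push_cast
    rw [mul_pow, pow_mul]
  have hNpos : (0:ℝ) < ((Fintype.card (Fin m → ZMod 2 × (Fin n → ZMod 2)) : ℕ) : ℝ) := by
    rw [hNcard]; positivity
  -- first moment
  have hS1 : (∑ a : Fin m → ZMod 2 × (Fin n → ZMod 2), X a) = W * K1 := by
    rw [hXdef]
    simp only [Finset.sum_filter]
    rw [Finset.sum_comm]
    have key : ∀ z ∈ R, (∑ a : Fin m → ZMod 2 × (Fin n → ZMod 2),
        if hashXor n m a z = α then w z else 0) = w z * K1 := by
      intro z _
      rw [← Finset.sum_filter, Finset.sum_const, card_single_hash' n m z α, nsmul_eq_mul,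
        hK1def]
      push_cast
      ring
    rw [Finset.sum_congr rfl key, ← Finset.sum_mul, ← hWdef]
  -- second moment
  have hS2 : (∑ a : Fin m → ZMod 2 × (Fin n → ZMod 2), (X a)^2)
      = Q * K1 + (W^2 - Q) * K2 := by
    have hsplit : ∀ a : Fin m → ZMod 2 × (Fin n → ZMod 2), (X a)^2
        = ∑ z ∈ R, ∑ z' ∈ R,
            ((if hashXor n m a z = α then w z else 0) *
             (if hashXor n m a z' = α then w z' else 0)) := by
      intro a
      rw [hXdef, sq]
      simp only [Finset.sum_filter]
      rw [Finset.sum_mul_sum]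
    simp only [hsplit]
    rw [Finset.sum_comm]
    have hswap : ∀ z ∈ R, (∑ a : Fin m → ZMod 2 × (Fin n → ZMod 2), ∑ z' ∈ R,
          ((if hashXor n m a z = α then w z else 0) *
           (if hashXor n m a z' = α then w z' else 0)))
        = ∑ z' ∈ R, ∑ a : Fin m → ZMod 2 × (Fin n → ZMod 2),
            ((if hashXor n m a z = α then w z else 0) *
             (if hashXor n m a z' = α then w z' else 0)) := by
      intro z _
      rw [Finset.sum_comm]
    rw [Finset.sum_congr rfl hswap]
    have hinner : ∀ z ∈ R, ∀ z' ∈ R,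
        (∑ a : Fin m → ZMod 2 × (Fin n → ZMod 2),
          ((if hashXor n m a z = α then w z else 0) *
           (if hashXor n m a z' = α then w z' else 0)))
        = w z * w z' *
            ((Finset.univ.filter (fun a : Fin m → ZMod 2 × (Fin n → ZMod 2) =>
              hashXor n m a z = α ∧ hashXor n m a z' = α)).card : ℝ) := by
      intro z _ z' _
      have : ∀ a : Fin m → ZMod 2 × (Fin n → ZMod 2),
          ((if hashXor n m a z = α then w z else 0) *
           (if hashXor n m a z' = α then w z' else 0))
          = if (hashXor n m a z = α ∧ hashXor n m a z' = α) then w z * w z' else 0 := by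
        intro a
        by_cases h1 : hashXor n m a z = α <;> by_cases h2 : hashXor n m a z' = α <;>
          simp [h1, h2]
      simp only [this]
      rw [← Finset.sum_filter, Finset.sum_const, nsmul_eq_mul]
      ring
    -- now split diagonal
    have hterm : ∀ z ∈ R, (∑ z' ∈ R, ∑ a : Fin m → ZMod 2 × (Fin n → ZMod 2),
          ((if hashXor n m a z = α then w z else 0) *
           (if hashXor n m a z' = α then w z' else 0)))
        = (w z)^2 * K1 + (∑ z' ∈ R.erase z, w z * w z') * K2 := by
      intro z hz
      rw [Finset.sum_congr rfl (fun z' hz' => hinner z hz z' hz')]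
      rw [← Finset.sum_erase_add _ _ hz]
      have hdiag : w z * w z *
            ((Finset.univ.filter (fun a : Fin m → ZMod 2 × (Fin n → ZMod 2) =>
              hashXor n m a z = α ∧ hashXor n m a z = α)).card : ℝ) = (w z)^2 * K1 := by
        have he : (Finset.univ.filter (fun a : Fin m → ZMod 2 × (Fin n → ZMod 2) =>
              hashXor n m a z = α ∧ hashXor n m a z = α))
            = Finset.univ.filter (fun a : Fin m → ZMod 2 × (Fin n → ZMod 2) =>
              hashXor n m a z = α) := by
          apply Finset.filter_congr
          intro a _
          simp
        rw [he, card_single_hash' n m z α, hK1def]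
        push_cast
        ring
      have hoff : ∀ z' ∈ R.erase z, w z * w z' *
            ((Finset.univ.filter (fun a : Fin m → ZMod 2 × (Fin n → ZMod 2) =>
              hashXor n m a z = α ∧ hashXor n m a z' = α)).card : ℝ)
          = w z * w z' * K2 := by
        intro z' hz'
        have hne : z ≠ z' := (Finset.ne_of_mem_erase hz').symm
        rw [card_pair_hash' n m hn z z' hne α, hK2def]
        push_cast
        ring
      rw [Finset.sum_congr rfl hoff, hdiag, ← Finset.sum_mul]
      ring
    rw [Finset.sum_congr rfl hterm, Finset.sum_add_distrib, ← Finset.sum_mul, ← hQdef,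
      ← Finset.sum_mul]
    congr 1
    congr 1
    -- ∑ z ∈ R, ∑ z' ∈ R.erase z, w z * w z' = W^2 - Q
    have : ∀ z ∈ R, (∑ z' ∈ R.erase z, w z * w z') = w z * W - (w z)^2 := by
      intro z hz
      rw [← Finset.mul_sum, Finset.sum_erase_eq_sub hz, ← hWdef]
      ring
    rw [Finset.sum_congr rfl this, Finset.sum_sub_distrib, ← Finset.sum_mul, ← hWdef, ← hQdef]
    ring
  -- variance bound
  have hVar : (∑ a : Fin m → ZMod 2 × (Fin n → ZMod 2), (X a - μ)^2) ≤ W * K1 := by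
    have hexpand : (∑ a : Fin m → ZMod 2 × (Fin n → ZMod 2), (X a - μ)^2)
        = (∑ a : Fin m → ZMod 2 × (Fin n → ZMod 2), (X a)^2)
          - 2 * μ * (∑ a : Fin m → ZMod 2 × (Fin n → ZMod 2), X a)
          + ((Fintype.card (Fin m → ZMod 2 × (Fin n → ZMod 2)) : ℕ) : ℝ) * μ^2 := by
      have hptw : ∀ a : Fin m → ZMod 2 × (Fin n → ZMod 2),
          (X a - μ)^2 = (X a)^2 - 2 * μ * (X a) + μ^2 := fun a => by ring
      rw [Finset.sum_congr rfl fun a _ => hptw a, Finset.sum_add_distrib,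
        Finset.sum_sub_distrib, ← Finset.mul_sum, Finset.sum_const, Finset.card_univ,
        nsmul_eq_mul]
    rw [hexpand, hS1, hS2, hNcard, hWμ, hK12]
    have h2ne : ((2:ℝ)^m) ≠ 0 := ne_of_gt h2mpos
    have hμ2 : (2:ℝ)^m * μ ≥ 0 := by positivity
    -- simplify: everything equals Q*(K1-K2) with K1 = K2*2^m
    have : Q * (K2 * (2:ℝ)^m) + (((2:ℝ)^m*μ)^2 - Q) * K2
        - 2*μ*((2:ℝ)^m*μ*(K2 * (2:ℝ)^m)) + ((2:ℝ)^m * (K2 * (2:ℝ)^m))*μ^2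
        = Q * (K2 * (2:ℝ)^m - K2) := by ring
    rw [this]
    calc Q * (K2 * (2:ℝ)^m - K2) ≤ Q * (K2 * (2:ℝ)^m) := by nlinarith only [mul_nonneg hQ0 (le_of_lt hK2pos)]
      _ ≤ W * (K2 * (2:ℝ)^m) := by
          apply mul_le_mul_of_nonneg_right hQW
          positivity
      _ = (2:ℝ)^m * μ * (K2 * (2:ℝ)^m) := by rw [hWμ]
  -- Chebyshev
  set B : Finset (Fin m → ZMod 2 × (Fin n → ZMod 2)) :=
    Finset.univ.filter (fun a => ¬ (pivot / (1 + κ) ≤ X a ∧ X a ≤ 1 + (1 + κ) * pivot))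
    with hBdef
  clear_value B
  have hBbound : ∀ a ∈ B, t^2 ≤ (X a - μ)^2 := by
    intro a ha
    rw [hBdef, Finset.mem_filter] at ha
    have ha' := ha.2
    rw [not_and_or, not_le, not_le] at ha'
    have hs : 1/(2:ℝ)^m ≤ 1/2 := by
      apply div_le_div_of_nonneg_left (by norm_num) (by norm_num) h2m
    have hspos : 0 < 1/(2:ℝ)^m := by positivity
    rcases ha' with hlo | hhi
    · -- X a < pivot / (1+κ)
      have h1 : X a * (1 + κ) < pivot := by
        rw [← lt_div_iff₀ hκ1']; exact hlo
      have h5 : t < μ - X a := by nlinarith only [h1, hμ_ge, ht', hκ1']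
      nlinarith only [h5, htpos]
    · -- X a > 1 + (1+κ)*pivot
      have hμs : μ = pivot + 1/(2:ℝ)^m := hμdef
      have h5 : t < X a - μ := by
        nlinarith only [ht', hs, hspos, hpivot_pos, hκ0, sq_nonneg κ, hμs, hκ1', hhi]
      nlinarith only [h5, htpos]
  have hcheb : (B.card : ℝ) * t^2 ≤ W * K1 := by
    calc (B.card : ℝ) * t^2 = ∑ _a ∈ B, t^2 := by
          rw [Finset.sum_const, nsmul_eq_mul]
      _ ≤ ∑ a ∈ B, (X a - μ)^2 := Finset.sum_le_sum hBbound
      _ ≤ ∑ a : Fin m → ZMod 2 × (Fin n → ZMod 2), (X a - μ)^2 := by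
          apply Finset.sum_le_sum_of_subset_of_nonneg (Finset.subset_univ B)
          intro i _ _
          positivity
      _ ≤ W * K1 := hVar
  -- final probability bound
  have h1 : Real.exp (3/2) * (1+κ)^2 ≤ κ^2 * pivot := by
    have he : κ^2 * (Real.exp (3/2) * (1 + 1/κ)^2) = Real.exp (3/2) * (1+κ)^2 := by
      field_simp
      ring
    nlinarith only [hpivot_ge, sq_nonneg κ, hκ0, he]
  have ht2 : t^2 * (1+κ)^2 = μ^2 * κ^2 := by
    rw [← mul_pow, ht', mul_pow]
  have hkey : μ * Real.exp (3/2) ≤ t^2 := by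
    rw [← mul_le_mul_iff_of_pos_right (show (0:ℝ) < (1+κ)^2 by positivity)]
    calc μ * Real.exp (3/2) * (1+κ)^2 = μ * (Real.exp (3/2) * (1+κ)^2) := by ring
      _ ≤ μ * (κ^2 * μ) := by
          apply mul_le_mul_of_nonneg_left _ (le_of_lt hμpos)
          nlinarith only [h1, hμ_ge, sq_nonneg κ, hκ0]
      _ = t^2 * (1+κ)^2 := by rw [ht2]; ring
  have hBfinal : (B.card : ℝ) ≤ Real.exp (-(3/2)) *
      ((Fintype.card (Fin m → ZMod 2 × (Fin n → ZMod 2)) : ℕ) : ℝ) := by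
    rw [Real.exp_neg]
    rw [hNcard]
    have hWK : W * K1 = μ * ((2:ℝ)^m * K1) := by rw [hWμ]; ring
    -- B.card * t^2 ≤ μ * (2^m K1) ≤ (t^2/exp) * (2^m K1)
    have hstep : (B.card : ℝ) * t^2 ≤ (t^2 / Real.exp (3/2)) * ((2:ℝ)^m * K1) := by
      calc (B.card : ℝ) * t^2 ≤ W * K1 := hcheb
        _ = μ * ((2:ℝ)^m * K1) := hWK
        _ ≤ (t^2 / Real.exp (3/2)) * ((2:ℝ)^m * K1) := by
            apply mul_le_mul_of_nonneg_right _ (by positivity)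
            rw [le_div_iff₀ (Real.exp_pos _)]
            exact hkey
    have ht2pos : (0:ℝ) < t^2 := by positivity
    have := (mul_le_mul_iff_of_pos_right ht2pos).mp (by
      calc (B.card : ℝ) * t^2 ≤ (t^2 / Real.exp (3/2)) * ((2:ℝ)^m * K1) := hstep
        _ = ((Real.exp (3/2))⁻¹ * ((2:ℝ)^m * K1)) * t^2 := by
            field_simp)
    exact this
  -- assemble
  have hsplit := Finset.card_filter_add_card_filter_not
    (s := (Finset.univ : Finset (Fin m → ZMod 2 × (Fin n → ZMod 2))))
    (fun a => pivot / (1 + κ) ≤ X a ∧ X a ≤ 1 + (1 + κ) * pivot)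
  rw [Finset.card_univ] at hsplit
  have hGoal : ((Finset.univ.filter
      (fun a : Fin m → ZMod 2 × (Fin n → ZMod 2) =>
        pivot / (1 + κ) ≤ X a ∧ X a ≤ 1 + (1 + κ) * pivot)).card : ℝ)
      = ((Fintype.card (Fin m → ZMod 2 × (Fin n → ZMod 2)) : ℕ) : ℝ) - (B.card : ℝ) := by
    rw [hBdef]
    have := hsplit
    push_cast [← this]
    ring
  have hfrac : (B.card : ℝ) /
      ((Fintype.card (Fin m → ZMod 2 × (Fin n → ZMod 2)) : ℕ) : ℝ)
      ≤ Real.exp (-(3/2)) := by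
    rw [div_le_iff₀ hNpos]
    exact hBfinal
  rw [hGoal, sub_div, div_self (ne_of_gt hNpos)]
  linarith only [hfrac]
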